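/- Let (a_n)_{n≥0} be a sequence of nonnegative reals with a_n ≤ C^n/√(n!) for some C > 0, and let V, t ≥ 0. Then the double series ∑_{q≥0} ∑_{m ≥ max(n-q,0)} ((2tV)^q/q!) · (√((m+q)!)/√(m!)) · (C^m/√(m!)) converges for every n, and is bounded above by ((2tV + C)^n/√(n!)) · ∑_{r≥0} (2tV + C)^r/√(r!). -/

import Mathlib

theorem aux_sqrt_fact_summable (D : ℝ) (hD : 0 ≤ D) :
    Summable fun r : ℕ => D ^ r / Real.sqrt r.factorial := by
  apply summable_of_ratio_norm_eventually_le (r := 1/2) (by norm_num)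
  filter_upwards [Filter.eventually_ge_atTop (⌈4 * D ^ 2⌉₊)] with r hr
  have h0 : (0:ℝ) < r.factorial := by exact_mod_cast r.factorial_pos
  have h1 : (0:ℝ) < Real.sqrt r.factorial := Real.sqrt_pos.2 h0
  have hfac : ((r+1).factorial : ℝ) = ((r:ℝ)+1) * r.factorial := by
    push_cast [Nat.factorial_succ]; ring
  have hs : Real.sqrt ((r+1).factorial) = Real.sqrt ((r:ℝ)+1) * Real.sqrt r.factorial := by
    rw [hfac, Real.sqrt_mul (by positivity)]
  have hDle : D ≤ 1/2 * Real.sqrt ((r:ℝ)+1) := by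
    have h4 : 4 * D ^ 2 ≤ (r:ℝ) + 1 := by
      have := Nat.le_ceil (4 * D ^ 2)
      have : (4 : ℝ) * D ^ 2 ≤ (r : ℝ) := this.trans (by exact_mod_cast hr)
      linarith
    nlinarith [Real.sq_sqrt (show (0:ℝ) ≤ (r:ℝ)+1 by positivity),
      Real.sqrt_nonneg ((r:ℝ)+1)]
  have hnorm : ∀ k : ℕ, ‖D ^ k / Real.sqrt k.factorial‖ = D ^ k / Real.sqrt k.factorial := by
    intro k
    have h0 : (0:ℝ) < k.factorial := by exact_mod_cast k.factorial_pos
    rw [Real.norm_eq_abs, abs_of_nonneg (by positivity)]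
  rw [hnorm, hnorm, hs, pow_succ]
  have hsr : (0:ℝ) < Real.sqrt ((r:ℝ)+1) := Real.sqrt_pos.2 (by positivity)
  rw [div_le_iff₀ (by positivity)]
  have hkey : 1/2 * (D ^ r / Real.sqrt r.factorial) * (Real.sqrt ((r:ℝ)+1) * Real.sqrt r.factorial)
      = D ^ r * (1/2 * Real.sqrt ((r:ℝ)+1)) := by
    field_simp
  rw [hkey]
  exact mul_le_mul_of_nonneg_left hDle (by positivity)


-- pointwise: f-term equals choose form, and ≤ g-term
theorem aux_pointwise (B C : ℝ) (hB : 0 ≤ B) (hC : 0 < C) (n q m : ℕ) (hn : n ≤ q + m) :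
    B ^ q / (q.factorial : ℝ) * (Real.sqrt ((m + q).factorial) / Real.sqrt (m.factorial))
        * (C ^ m / Real.sqrt (m.factorial))
      ≤ ((q + m).choose q : ℝ) * B ^ q * C ^ m
          / (Real.sqrt n.factorial * Real.sqrt ((q + m - n).factorial)) := by
  set s := q + m with hs
  have hmq : m + q = s := by omega
  have sqrt_fact_pos : ∀ k : ℕ, (0:ℝ) < Real.sqrt k.factorial := fun k =>
    Real.sqrt_pos.2 (by exact_mod_cast k.factorial_pos)
  have hqfac : (0:ℝ) < q.factorial := by exact_mod_cast q.factorial_pos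
  have hchoose : ((s.choose q : ℝ)) * q.factorial * m.factorial = s.factorial := by
    have := Nat.choose_mul_factorial_mul_factorial (show q ≤ s by omega)
    have hsub : s - q = m := by omega
    rw [hsub] at this
    exact_mod_cast this
  have heq : B ^ q / (q.factorial : ℝ) * (Real.sqrt ((m + q).factorial) / Real.sqrt (m.factorial))
        * (C ^ m / Real.sqrt (m.factorial))
      = ((s.choose q : ℝ)) * B ^ q * C ^ m / Real.sqrt s.factorial := by
    rw [hmq]
    have E : Real.sqrt (s.factorial) / ((q.factorial : ℝ) * (Real.sqrt m.factorial * Real.sqrt m.factorial))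
        = (s.choose q : ℝ) / Real.sqrt s.factorial := by
      rw [Real.mul_self_sqrt (by positivity)]
      rw [div_eq_div_iff (by positivity) (sqrt_fact_pos s).ne']
      rw [Real.mul_self_sqrt (by positivity)]
      rw [← hchoose]; ring
    calc B ^ q / (q.factorial : ℝ) * (Real.sqrt (s.factorial) / Real.sqrt (m.factorial))
        * (C ^ m / Real.sqrt (m.factorial))
        = B ^ q * C ^ m * (Real.sqrt (s.factorial)
            / ((q.factorial : ℝ) * (Real.sqrt m.factorial * Real.sqrt m.factorial))) := by
          field_simp
      _ = B ^ q * C ^ m * ((s.choose q : ℝ) / Real.sqrt s.factorial) := by rw [E]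
      _ = ((s.choose q : ℝ)) * B ^ q * C ^ m / Real.sqrt s.factorial := by ring
  rw [heq]
  apply div_le_div_of_nonneg_left (by positivity) (by positivity)
  rw [← Real.sqrt_mul (by positivity)]
  apply Real.sqrt_le_sqrt
  have h1 : n.factorial * (s - n).factorial ≤ s.factorial := by
    have h := Nat.choose_mul_factorial_mul_factorial (show n ≤ s from hn)
    calc n.factorial * (s - n).factorial ≤ s.choose n * n.factorial * (s - n).factorial := by
          have := Nat.choose_pos (show n ≤ s from hn)
          nlinarith [Nat.factorial_pos n, Nat.factorial_pos (s - n)]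
      _ = s.factorial := h
  exact_mod_cast h1

-- antidiagonal sum
theorem aux_antidiag (B C : ℝ) (hB : 0 ≤ B) (hC : 0 < C) (n s : ℕ) :
    ∑ qm ∈ Finset.HasAntidiagonal.antidiagonal s,
      (if n ≤ qm.1 + qm.2 then
        ((qm.1 + qm.2).choose qm.1 : ℝ) * B ^ qm.1 * C ^ qm.2
          / (Real.sqrt n.factorial * Real.sqrt ((qm.1 + qm.2 - n).factorial))
      else 0)
    = if n ≤ s then (B + C) ^ s / (Real.sqrt n.factorial * Real.sqrt ((s - n).factorial)) else 0 := by
  rw [Finset.Nat.sum_antidiagonal_eq_sum_range_succ_mk]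
  have hcong : ∀ k ∈ Finset.range (s + 1),
      (if n ≤ k + (s - k) then
        ((k + (s - k)).choose k : ℝ) * B ^ k * C ^ (s - k)
          / (Real.sqrt n.factorial * Real.sqrt ((k + (s - k) - n).factorial))
      else 0)
      = if n ≤ s then (s.choose k : ℝ) * B ^ k * C ^ (s - k)
          / (Real.sqrt n.factorial * Real.sqrt ((s - n).factorial)) else 0 := by
    intro k hk
    rw [Finset.mem_range] at hk
    have : k + (s - k) = s := by omega
    rw [this]
  rw [Finset.sum_congr rfl hcong]
  by_cases h : n ≤ s
  · simp only [h, if_true]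
    rw [add_pow B C s, Finset.sum_div]
    apply Finset.sum_congr rfl
    intro k _
    ring
  · simp [h]


theorem dyson_double_series_estimate
    (a : ℕ → ℝ) (ha_nonneg : ∀ n, 0 ≤ a n) (C : ℝ) (hC : 0 < C)
    (ha : ∀ n, a n ≤ C ^ n / Real.sqrt (n.factorial))
    (V t : ℝ) (hV : 0 ≤ V) (ht : 0 ≤ t) (n : ℕ) :
    Summable (fun qm : ℕ × ℕ =>
      if n - qm.1 ≤ qm.2 then
        (2 * t * V) ^ qm.1 / (qm.1.factorial : ℝ)
          * (Real.sqrt ((qm.2 + qm.1).factorial) / Real.sqrt (qm.2.factorial))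
          * (C ^ qm.2 / Real.sqrt (qm.2.factorial))
      else 0) ∧
    (∑' qm : ℕ × ℕ,
      if n - qm.1 ≤ qm.2 then
        (2 * t * V) ^ qm.1 / (qm.1.factorial : ℝ)
          * (Real.sqrt ((qm.2 + qm.1).factorial) / Real.sqrt (qm.2.factorial))
          * (C ^ qm.2 / Real.sqrt (qm.2.factorial))
      else 0)
      ≤ (2 * t * V + C) ^ n / Real.sqrt (n.factorial)
          * ∑' r : ℕ, (2 * t * V + C) ^ r / Real.sqrt (r.factorial) := by
  set B := 2 * t * V with hBdef
  have hB : 0 ≤ B := by positivity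
  set D := B + C with hDdef
  have hD : 0 < D := by positivity
  have hTsum : Summable fun r : ℕ => D ^ r / Real.sqrt r.factorial :=
    aux_sqrt_fact_summable D hD.le
  set T := ∑' r : ℕ, D ^ r / Real.sqrt r.factorial with hTdef
  set f : ℕ × ℕ → ℝ := fun qm =>
      if n - qm.1 ≤ qm.2 then
        B ^ qm.1 / (qm.1.factorial : ℝ)
          * (Real.sqrt ((qm.2 + qm.1).factorial) / Real.sqrt (qm.2.factorial))
          * (C ^ qm.2 / Real.sqrt (qm.2.factorial))
      else 0 with hfdef
  set g : ℕ × ℕ → ℝ := fun qm =>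
      if n ≤ qm.1 + qm.2 then
        ((qm.1 + qm.2).choose qm.1 : ℝ) * B ^ qm.1 * C ^ qm.2
          / (Real.sqrt n.factorial * Real.sqrt ((qm.1 + qm.2 - n).factorial))
      else 0 with hgdef
  have sqrt_fact_pos : ∀ k : ℕ, (0:ℝ) < Real.sqrt k.factorial := fun k =>
    Real.sqrt_pos.2 (by exact_mod_cast k.factorial_pos)
  have hg_nonneg : ∀ qm, 0 ≤ g qm := by
    intro qm
    simp only [hgdef]
    split
    · have h1 := sqrt_fact_pos n
      have h2 := sqrt_fact_pos (qm.1 + qm.2 - n)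
      positivity
    · exact le_refl 0
  have hf_nonneg : ∀ qm, 0 ≤ f qm := by
    intro qm
    simp only [hfdef]
    split
    · have h1 := sqrt_fact_pos qm.2
      have h2 := Real.sqrt_nonneg (((qm.2 + qm.1).factorial : ℕ) : ℝ)
      have h3 : (0:ℝ) < qm.1.factorial := by exact_mod_cast qm.1.factorial_pos
      positivity
    · exact le_refl 0
  have hfg : ∀ qm, f qm ≤ g qm := by
    rintro ⟨q, m⟩
    simp only [hfdef, hgdef]
    by_cases h : n - q ≤ m
    · rw [if_pos h, if_pos (show n ≤ q + m by omega)]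
      exact aux_pointwise B C hB hC n q m (by omega)
    · rw [if_neg h, if_neg (show ¬ n ≤ q + m by omega)]
  -- finite sum bound for g
  have hbound : ∀ u : Finset (ℕ × ℕ),
      ∑ qm ∈ u, g qm ≤ D ^ n / Real.sqrt n.factorial * T := by
    intro u
    set N := (u.sup fun p => p.1 + p.2) + 1 with hN
    have hsub : u ⊆ (Finset.range N).biUnion Finset.HasAntidiagonal.antidiagonal := by
      intro p hp
      rw [Finset.mem_biUnion]
      refine ⟨p.1 + p.2, ?_, ?_⟩
      · rw [Finset.mem_range]
        exact Nat.lt_succ_of_le (Finset.le_sup (f := fun p : ℕ × ℕ => p.1 + p.2) hp)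
      · rw [Finset.HasAntidiagonal.mem_antidiagonal]
    have hdisj : (↑(Finset.range N) : Set ℕ).PairwiseDisjoint Finset.HasAntidiagonal.antidiagonal := by
      intro s _ s' _ hss'
      apply Finset.disjoint_left.2
      intro p hp hp'
      rw [Finset.HasAntidiagonal.mem_antidiagonal] at hp hp'
      exact hss' (hp ▸ hp')
    calc ∑ qm ∈ u, g qm
        ≤ ∑ qm ∈ (Finset.range N).biUnion Finset.HasAntidiagonal.antidiagonal, g qm :=
          Finset.sum_le_sum_of_subset_of_nonneg hsub (fun i _ _ => hg_nonneg i)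
      _ = ∑ s ∈ Finset.range N, ∑ qm ∈ Finset.HasAntidiagonal.antidiagonal s, g qm :=
          Finset.sum_biUnion hdisj
      _ = ∑ s ∈ Finset.range N, (if n ≤ s then
            D ^ s / (Real.sqrt n.factorial * Real.sqrt ((s - n).factorial)) else 0) := by
          refine Finset.sum_congr rfl fun s _ => ?_
          rw [hgdef, hDdef]
          exact aux_antidiag B C hB hC n s
      _ = ∑ s ∈ Finset.Ico n N,
            D ^ s / (Real.sqrt n.factorial * Real.sqrt ((s - n).factorial)) := by
          rw [← Finset.sum_filter]
          refine Finset.sum_congr ?_ fun s _ => rfl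
          ext s
          simp only [Finset.mem_filter, Finset.mem_range, Finset.mem_Ico]
          omega
      _ = ∑ k ∈ Finset.range (N - n),
            D ^ (n + k) / (Real.sqrt n.factorial * Real.sqrt ((n + k - n).factorial)) :=
          Finset.sum_Ico_eq_sum_range _ n N
      _ = ∑ k ∈ Finset.range (N - n),
            D ^ n / Real.sqrt n.factorial * (D ^ k / Real.sqrt k.factorial) := by
          refine Finset.sum_congr rfl fun k _ => ?_
          rw [show n + k - n = k by omega, pow_add]
          field_simp
      _ = D ^ n / Real.sqrt n.factorial
            * ∑ k ∈ Finset.range (N - n), D ^ k / Real.sqrt k.factorial := by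
          rw [Finset.mul_sum]
      _ ≤ D ^ n / Real.sqrt n.factorial * T := by
          apply mul_le_mul_of_nonneg_left _ (by positivity)
          exact Summable.sum_le_tsum _ (fun k _ => by positivity) hTsum
  have hSg : Summable g := summable_of_sum_le (fun qm => hg_nonneg qm) hbound
  have hSf : Summable f := Summable.of_nonneg_of_le hf_nonneg hfg hSg
  refine ⟨hSf, ?_⟩
  calc ∑' qm, f qm ≤ ∑' qm, g qm := Summable.tsum_le_tsum hfg hSf hSg
    _ ≤ D ^ n / Real.sqrt n.factorial * T := Summable.tsum_le_of_sum_le hSg hbound
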